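/- arXiv:1409.3118 — 2 statements merged into one kernel-verified Lean document; each statement's English description precedes it below -/
import Mathlib

section
/- With C* as above, for every measurable f with finite e_log Luxembourg norm: ∫ |f(x)|·ln⁺|f(x)| dx ≤ ‖f‖_{e_log}·(1 + 2C*·ln⁺‖f‖_{e_log}). -/
open MeasureTheory Real ENNReal

noncomputable section

abbrev E (d : ℕ) := EuclideanSpace ℝ (Fin d)

def elog (t : ℝ) : ℝ := (1 + |t|) * Real.log (1 + |t|)

def lnpos (x : ℝ) : ℝ := max 0 (Real.log |x|)

def luxNorm {d : ℕ} (e : ℝ → ℝ) (f : E d → ℝ) : ℝ :=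
  sInf {c : ℝ | 0 < c ∧ ∫⁻ x, ENNReal.ofReal (e (f x / c)) ≤ 1}

lemma lnpos_nonneg (x : ℝ) : 0 ≤ lnpos x := le_max_left _ _
lemma elog_nonneg (t : ℝ) : 0 ≤ elog t :=
  mul_nonneg (by positivity) (Real.log_nonneg (by linarith [abs_nonneg t]))

lemma measurable_elog : Measurable elog :=
  ((measurable_const.add measurable_abs)).mul
    (Real.measurable_log.comp (measurable_const.add measurable_abs))

lemma lnpos_mul_le (a b : ℝ) : lnpos (a * b) ≤ lnpos a + lnpos b := by
  have hnn : (0:ℝ) ≤ lnpos a + lnpos b := by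
    have := lnpos_nonneg a; have := lnpos_nonneg b; linarith
  rcases eq_or_ne a 0 with ha | ha
  · simp only [ha, zero_mul]; simpa [lnpos, Real.log_zero] using hnn
  rcases eq_or_ne b 0 with hb | hb
  · simp only [hb, mul_zero]; simpa [lnpos, Real.log_zero] using hnn
  · unfold lnpos
    rw [abs_mul, Real.log_mul (abs_ne_zero.mpr ha) (abs_ne_zero.mpr hb)]
    apply max_le (by simpa [lnpos] using hnn)
    exact add_le_add (le_max_right _ _) (le_max_right _ _)

-- t lnpos t ≤ elog t for t ≥ 0
lemma mul_lnpos_le_elog {t : ℝ} (ht : 0 ≤ t) : t * lnpos t ≤ elog t := by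
  rcases le_or_gt t 1 with h1 | h1
  · have : lnpos t = 0 := by
      unfold lnpos
      rw [abs_of_nonneg ht]
      exact max_eq_left (Real.log_nonpos ht h1)
    rw [this, mul_zero]; exact elog_nonneg t
  · have hlog : 0 ≤ Real.log t := Real.log_nonneg h1.le
    have : lnpos t = Real.log t := by
      unfold lnpos; rw [abs_of_nonneg ht]; exact max_eq_right hlog
    rw [this]
    unfold elog
    rw [abs_of_nonneg ht]
    exact mul_le_mul (by linarith) (Real.log_le_log (by linarith) (by linarith)) hlog (by linarith)

-- elog monotone in abs
lemma elog_mono {u v : ℝ} (h : |u| ≤ |v|) : elog u ≤ elog v := by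
  unfold elog
  have h0 : (0:ℝ) ≤ |u| := abs_nonneg u
  exact mul_le_mul (by linarith) (Real.log_le_log (by linarith) (by linarith))
    (Real.log_nonneg (by linarith)) (by linarith)

-- L1 pointwise: t ≤ C* elog t for t ≥ 0
lemma le_cstar_mul_elog (εs : ℝ) (hεs : 0 < εs)
    (hεprop : ∀ t : ℝ, 0 < t → t ≤ εs → t ≤ 2 * Real.log (1 + t))
    {t : ℝ} (ht : 0 ≤ t) : t ≤ (2 + 1 / Real.log (1 + εs)) * elog t := by
  set L := Real.log (1 + εs) with hL
  have hLpos : 0 < L := Real.log_pos (by linarith)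
  have hC : (0:ℝ) < 2 + 1/L := by positivity
  have helog : elog t = (1 + t) * Real.log (1 + t) := by unfold elog; rw [abs_of_nonneg ht]
  have hlognn : 0 ≤ Real.log (1 + t) := Real.log_nonneg (by linarith)
  rcases eq_or_lt_of_le ht with h0 | h0
  · simp [← h0, elog]
  rcases le_or_gt t εs with hle | hgt
  · have h1 := hεprop t h0 hle
    have h2 : 2 * Real.log (1 + t) ≤ 2 * ((1 + t) * Real.log (1 + t)) := by nlinarith
    have h3 : 2 * ((1 + t) * Real.log (1 + t)) ≤ (2 + 1/L) * ((1+t) * Real.log (1+t)) := by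
      have : 0 < 1/L := by positivity
      nlinarith
    rw [helog]; linarith
  · have hL2 : L ≤ Real.log (1 + t) := Real.log_le_log (by linarith) (by linarith)
    have key : 1 + t ≤ (1/L) * ((1+t) * Real.log (1+t)) := by
      calc 1 + t = (1+t) * 1 := by ring
        _ ≤ (1+t) * (Real.log (1+t) / L) := by
            apply mul_le_mul_of_nonneg_left _ (by linarith)
            rw [le_div_iff₀ hLpos]; linarith
        _ = (1/L) * ((1+t) * Real.log (1+t)) := by ring
    rw [helog]
    nlinarith

lemma elog_abs (u : ℝ) : elog |u| = elog u := by unfold elog; rw [abs_abs]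
lemma lnpos_abs (u : ℝ) : lnpos |u| = lnpos u := by unfold lnpos; rw [abs_abs]

lemma keyBound (d : ℕ) (εs : ℝ) (hεs : 0 < εs)
    (hεprop : ∀ t : ℝ, 0 < t → t ≤ εs → t ≤ 2 * Real.log (1 + t))
    (f : E d → ℝ) (hf : Measurable f) {c : ℝ} (hc : 0 < c)
    (hS : ∫⁻ x, ENNReal.ofReal (elog (f x / c)) ≤ 1) :
    ∫⁻ x, ENNReal.ofReal (|f x| * lnpos (f x)) ≤
      ENNReal.ofReal (c * (1 + (2 + 1 / Real.log (1 + εs)) * lnpos c)) := by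
  set C : ℝ := 2 + 1 / Real.log (1 + εs) with hC
  have hCpos : 0 < C := by
    have : 0 < Real.log (1 + εs) := Real.log_pos (by linarith)
    positivity
  have habs : ∀ x : E d, |f x| / c = |f x / c| := fun x => by
    rw [abs_div, abs_of_pos hc]
  have hmeasE : Measurable fun x => ENNReal.ofReal (elog (f x / c)) :=
    ENNReal.measurable_ofReal.comp (measurable_elog.comp (hf.div_const c))
  -- L1 bound
  have hL1 : ∫⁻ x, ENNReal.ofReal |f x| ≤ ENNReal.ofReal (C * c) := by
    have hpt : ∀ x, |f x| ≤ (C * c) * elog (f x / c) := by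
      intro x
      have h1 : |f x| / c ≤ C * elog (|f x| / c) :=
        le_cstar_mul_elog εs hεs hεprop (by positivity)
      have he : elog (|f x| / c) = elog (f x / c) := by rw [habs x]; exact elog_abs _
      rw [he, div_le_iff₀ hc] at h1
      linarith [h1]
    calc ∫⁻ x, ENNReal.ofReal |f x|
        ≤ ∫⁻ x, ENNReal.ofReal ((C * c) * elog (f x / c)) :=
          lintegral_mono fun x => ENNReal.ofReal_le_ofReal (hpt x)
      _ = ENNReal.ofReal (C * c) * ∫⁻ x, ENNReal.ofReal (elog (f x / c)) := by
          simp_rw [ENNReal.ofReal_mul (by positivity : (0:ℝ) ≤ C * c)]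
          exact lintegral_const_mul' _ _ ENNReal.ofReal_ne_top
      _ ≤ ENNReal.ofReal (C * c) * 1 := mul_le_mul_right hS _
      _ = ENNReal.ofReal (C * c) := mul_one _
  -- pointwise bound
  have hpt : ∀ x, |f x| * lnpos (f x) ≤ c * elog (f x / c) + lnpos c * |f x| := by
    intro x
    have h0 : lnpos (f x) ≤ lnpos (f x / c) + lnpos c := by
      have := lnpos_mul_le (f x / c) c
      rwa [div_mul_cancel₀ _ hc.ne'] at this
    have h1 : |f x| * lnpos (f x) ≤ |f x| * lnpos (f x / c) + |f x| * lnpos c := by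
      have := mul_le_mul_of_nonneg_left h0 (abs_nonneg (f x))
      linarith [this]
    have h2 : |f x| * lnpos (f x / c) ≤ c * elog (f x / c) := by
      have ht : (0:ℝ) ≤ |f x| / c := by positivity
      have := mul_lnpos_le_elog ht
      rw [habs x, lnpos_abs, elog_abs] at this
      have h3 := mul_le_mul_of_nonneg_left this hc.le
      calc |f x| * lnpos (f x / c) = c * (|f x / c| * lnpos (f x / c)) := by
            rw [← habs x]; field_simp
        _ ≤ c * elog (f x / c) := by
            rw [← habs x] at h3 ⊢
            exact h3
      -- fix
    have h4 : |f x| * lnpos c ≤ lnpos c * |f x| := by linarith [mul_comm (|f x|) (lnpos c)]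
    nlinarith [h2, h1, mul_comm (|f x|) (lnpos c)]
  calc ∫⁻ x, ENNReal.ofReal (|f x| * lnpos (f x))
      ≤ ∫⁻ x, (ENNReal.ofReal (c * elog (f x / c)) + ENNReal.ofReal (lnpos c * |f x|)) :=
        lintegral_mono fun x =>
          le_trans (ENNReal.ofReal_le_ofReal (hpt x)) ENNReal.ofReal_add_le
    _ = (∫⁻ x, ENNReal.ofReal (c * elog (f x / c))) +
        ∫⁻ x, ENNReal.ofReal (lnpos c * |f x|) :=
        lintegral_add_left (ENNReal.measurable_ofReal.comp
          ((measurable_elog.comp (hf.div_const c)).const_mul c)) _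
    _ ≤ ENNReal.ofReal c * 1 + ENNReal.ofReal (lnpos c) * ENNReal.ofReal (C * c) := by
        gcongr
        · calc ∫⁻ x, ENNReal.ofReal (c * elog (f x / c))
              = ENNReal.ofReal c * ∫⁻ x, ENNReal.ofReal (elog (f x / c)) := by
                simp_rw [ENNReal.ofReal_mul hc.le]
                exact lintegral_const_mul' _ _ ENNReal.ofReal_ne_top
            _ ≤ ENNReal.ofReal c * 1 := mul_le_mul_right hS _
        · calc ∫⁻ x, ENNReal.ofReal (lnpos c * |f x|)
              = ENNReal.ofReal (lnpos c) * ∫⁻ x, ENNReal.ofReal |f x| := by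
                simp_rw [ENNReal.ofReal_mul (lnpos_nonneg c)]
                exact lintegral_const_mul' _ _ ENNReal.ofReal_ne_top
            _ ≤ ENNReal.ofReal (lnpos c) * ENNReal.ofReal (C * c) :=
                mul_le_mul_right hL1 _
    _ = ENNReal.ofReal (c * (1 + C * lnpos c)) := by
        rw [mul_one, ← ENNReal.ofReal_mul (lnpos_nonneg c),
          ← ENNReal.ofReal_add hc.le (mul_nonneg (lnpos_nonneg c) (by positivity))]
        congr 1; ring

/-- With `C* = 2 + 1/ln(1+ε*)` as in the L¹ bound, for every measurable `f` with finite
`e_log` Luxembourg norm: `∫ |f| ln⁺|f| ≤ ‖f‖_{e_log} (1 + 2C* ln⁺‖f‖_{e_log})`. -/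
theorem LlogL_le_luxNorm_elog (d : ℕ) (εs : ℝ) (hεs : 0 < εs)
    (hεprop : ∀ t : ℝ, 0 < t → t ≤ εs → t ≤ 2 * Real.log (1 + t))
    (f : E d → ℝ) (hf : Measurable f)
    (hfin : ∃ c : ℝ, 0 < c ∧ ∫⁻ x, ENNReal.ofReal (elog (f x / c)) ≤ 1) :
    ∫⁻ x, ENNReal.ofReal (|f x| * lnpos (f x)) ≤
      ENNReal.ofReal (luxNorm elog f *
        (1 + 2 * (2 + 1 / Real.log (1 + εs)) * lnpos (luxNorm elog f))) := by
  set C : ℝ := 2 + 1 / Real.log (1 + εs) with hC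
  have hCpos : 0 < C := by
    have : 0 < Real.log (1 + εs) := Real.log_pos (by linarith)
    positivity
  set S : Set ℝ := {c : ℝ | 0 < c ∧ ∫⁻ x, ENNReal.ofReal (elog (f x / c)) ≤ 1} with hSdef
  have hSne : S.Nonempty := hfin
  set N : ℝ := luxNorm elog f with hNdef
  have hNS : N = sInf S := rfl
  have hN0 : 0 ≤ N := by
    rw [hNS]; exact Real.sInf_nonneg fun c hc => hc.1.le
  have hmem : ∀ c : ℝ, N < c → 0 < c ∧ ∫⁻ x, ENNReal.ofReal (elog (f x / c)) ≤ 1 := by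
    intro c hc
    rw [hNS] at hc
    obtain ⟨s, hsS, hsc⟩ := exists_lt_of_csInf_lt hSne hc
    obtain ⟨hs0, hsInt⟩ := hsS
    have hc0 : 0 < c := lt_trans hs0 hsc
    refine ⟨hc0, le_trans (lintegral_mono fun x => ENNReal.ofReal_le_ofReal (elog_mono ?_)) hsInt⟩
    rw [abs_div, abs_div, abs_of_pos hc0, abs_of_pos hs0]
    gcongr
  apply ENNReal.le_of_forall_pos_le_add
  intro ε hε _
  have hεR : (0:ℝ) < (ε:ℝ) := hε
  rcases eq_or_lt_of_le hN0 with hN | hN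
  · -- N = 0
    set c : ℝ := min 1 (ε:ℝ) with hcdef
    have hc0 : 0 < c := lt_min one_pos hεR
    obtain ⟨_, hcS⟩ := hmem c (by rw [← hN]; exact hc0)
    have key := keyBound d εs hεs hεprop f hf hc0 hcS
    have hlc : lnpos c = 0 := by
      unfold lnpos
      rw [abs_of_pos hc0]
      exact max_eq_left (Real.log_nonpos hc0.le (min_le_left _ _))
    rw [hlc] at key
    calc ∫⁻ x, ENNReal.ofReal (|f x| * lnpos (f x))
        ≤ ENNReal.ofReal (c * (1 + C * 0)) := key
      _ = ENNReal.ofReal c := by norm_num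
      _ ≤ (ε : ℝ≥0∞) := by
          rw [← ENNReal.ofReal_coe_nnreal]
          exact ENNReal.ofReal_le_ofReal (min_le_right _ _)
      _ ≤ ENNReal.ofReal (N * (1 + 2 * C * lnpos N)) + ↑ε := le_add_self
  · -- N > 0
    set g : ℝ → ℝ := fun c => c * (1 + C * lnpos c) with hgdef
    have hlncont : ContinuousAt lnpos N := by
      have h1 : ContinuousAt (fun x : ℝ => Real.log |x|) N :=
        (Real.continuousAt_log (abs_ne_zero.mpr hN.ne')).comp continuous_abs.continuousAt
      exact continuousAt_const.max h1
    have hg : ContinuousAt g N :=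
      continuousAt_id.mul (continuousAt_const.add (continuousAt_const.mul hlncont))
    obtain ⟨δ, hδ0, hδ⟩ := Metric.continuousAt_iff.mp hg (ε:ℝ) hεR
    set c : ℝ := N + δ/2 with hcdef
    have hcN : N < c := by rw [hcdef]; linarith
    have hdist : dist c N < δ := by
      rw [Real.dist_eq, hcdef]
      rw [show N + δ/2 - N = δ/2 by ring, abs_of_pos (by linarith)]
      linarith
    have hgc : g c ≤ g N + (ε:ℝ) := by
      have := hδ hdist
      rw [Real.dist_eq] at this
      have := abs_sub_lt_iff.mp this
      linarith [this.1]
    obtain ⟨hc0, hcS⟩ := hmem c hcN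
    have key := keyBound d εs hεs hεprop f hf hc0 hcS
    have hgN : g N ≤ N * (1 + 2 * C * lnpos N) := by
      have h1 : 0 ≤ lnpos N := lnpos_nonneg N
      have : g N = N * (1 + C * lnpos N) := rfl
      rw [this]
      nlinarith [mul_nonneg (mul_nonneg hN0 hCpos.le) h1]
    calc ∫⁻ x, ENNReal.ofReal (|f x| * lnpos (f x))
        ≤ ENNReal.ofReal (g c) := key
      _ ≤ ENNReal.ofReal (g N + (ε:ℝ)) := ENNReal.ofReal_le_ofReal hgc
      _ ≤ ENNReal.ofReal (g N) + ENNReal.ofReal (ε:ℝ) := ENNReal.ofReal_add_le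
      _ ≤ ENNReal.ofReal (N * (1 + 2 * C * lnpos N)) + ↑ε := by
          rw [ENNReal.ofReal_coe_nnreal]
          exact add_le_add_left (ENNReal.ofReal_le_ofReal hgN) _
end
end

section
/- Let e be a Young function with s ↦ e(s)/s nondecreasing and let ρ_{n,p}(z) = (1 + 2^n|z|)^{-p} on ℝ^d with p > d. Then there is a constant C_p depending only on p and d such that ‖ρ_{n,p}‖_e ≤ 1/e⁻¹(2^{nd}/C_p), where e⁻¹(a) = sup{c : e(c) ≤ a} and ‖·‖_e is the Luxembourg norm. -/
open MeasureTheory Real ENNReal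

noncomputable section

def einv (e : ℝ → ℝ) (a : ℝ) : ℝ := sSup {c : ℝ | e c ≤ a}

/-- For `p > d` there is a constant `C_p` (depending only on `p` and `d`) such that for
every Young function `e` with `s ↦ e(s)/s` nondecreasing and every `n`,
`‖(1 + 2ⁿ|·|)^{-p}‖ₑ ≤ 1 / e⁻¹(2^{nd}/C_p)`. -/
theorem luxNorm_rho_le (d : ℕ) (p : ℝ) (hp : (d : ℝ) < p) :
    ∃ C : ℝ, 0 < C ∧ ∀ e : ℝ → ℝ,
      (∀ s, e (-s) = e s) →
      StrictConvexOn ℝ Set.univ e →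
      (∀ s, 0 ≤ e s) →
      e 0 = 0 →
      (∀ s t : ℝ, 0 < s → s ≤ t → e s / s ≤ e t / t) →
      ∀ n : ℕ,
        luxNorm e (fun z : E d => (1 + 2 ^ n * ‖z‖) ^ (-p)) ≤
          1 / einv e ((2 : ℝ) ^ (n * d) / C) := by
  classical
  set K : ℝ≥0∞ := ∫⁻ x : E d, ENNReal.ofReal ((1 + ‖x‖) ^ (-p)) with hKdef
  have hKlt : K < ∞ := by
    have h := finite_integral_one_add_norm
      (E := E d) (μ := volume) (r := p) (by simpa [finrank_euclideanSpace_fin] using hp)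
    simpa [hKdef] using h
  set C : ℝ := max K.toReal 1 with hCdef
  have hCpos : (0:ℝ) < C := lt_of_lt_of_le one_pos (le_max_right _ _)
  refine ⟨C, hCpos, ?_⟩
  intro e heven hsc henn h0 hmono n
  set a : ℝ := (2 : ℝ) ^ (n * d) / C with hadef
  have ha : 0 < a := div_pos (pow_pos two_pos _) hCpos
  have hconv : ConvexOn ℝ Set.univ e := hsc.convexOn
  have hcont : Continuous e := by
    rw [← continuousOn_univ]
    exact hconv.continuousOn isOpen_univ
  set S : Set ℝ := {c : ℝ | e c ≤ a} with hSdef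
  have hS0 : (0:ℝ) ∈ S := by simp [hSdef, h0, ha.le]
  have he1 : 0 < e 1 := by
    have := hsc.2 (Set.mem_univ (-1 : ℝ)) (Set.mem_univ (1 : ℝ)) (by norm_num)
      (by norm_num : (0:ℝ) < 1/2) (by norm_num : (0:ℝ) < 1/2) (by norm_num)
    simp only [heven 1, smul_eq_mul] at this
    have h01 : (1:ℝ)/2 * 1 + 1/2 * 1 = 1 := by norm_num
    nlinarith [this, h0]
  have hbdd : BddAbove S := by
    refine ⟨max 1 (a / e 1), fun c hc => ?_⟩
    rcases le_or_gt c 1 with h | h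
    · exact le_max_of_le_left h
    · have := hmono 1 c one_pos h.le
      rw [div_one] at this
      have hec : c * e 1 ≤ e c := by
        rw [le_div_iff₀ (lt_trans one_pos h)] at this
        linarith [this]
      have : c ≤ a / e 1 := by
        rw [le_div_iff₀ he1]
        exact le_trans hec hc
      exact le_max_of_le_right this
  set m : ℝ := einv e a with hmdef
  have hmmem : m ∈ S := by
    have hclosed : IsClosed S := (isClosed_Iic (a := a)).preimage hcont
    exact hclosed.csSup_mem ⟨0, hS0⟩ hbdd
  have hem : e m ≤ a := hmmem
  have hmpos : 0 < m := by
    have hev : ∀ᶠ x in nhds (0:ℝ), e x < a := by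
      have ht : Filter.Tendsto e (nhds 0) (nhds (e 0)) := hcont.tendsto 0
      rw [h0] at ht
      exact ht.eventually_lt_const ha
    obtain ⟨δ, hδ, hδe⟩ := Metric.eventually_nhds_iff.mp hev
    have hmem2 : δ/2 ∈ S := by
      have : e (δ/2) < a := hδe (by
        simp only [Real.dist_eq, sub_zero]
        rw [abs_of_pos (by linarith)]
        linarith)
      exact this.le
    exact lt_of_lt_of_le (by linarith) (le_csSup hbdd hmem2)
  -- the candidate c
  have hc : (0:ℝ) < 1/m := by positivity
  -- pointwise facts about ρ
  have hrho : ∀ x : E d, 0 < (1 + 2 ^ n * ‖x‖) ^ (-p) ∧ (1 + 2 ^ n * ‖x‖) ^ (-p) ≤ 1 := by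
    intro x
    have hb : (1:ℝ) ≤ 1 + 2 ^ n * ‖x‖ :=
      le_add_of_nonneg_right (by positivity)
    constructor
    · exact Real.rpow_pos_of_pos (by linarith) _
    · have hp0 : (0:ℝ) ≤ p := le_of_lt (lt_of_le_of_lt (Nat.cast_nonneg d) hp)
      exact Real.rpow_le_one_of_one_le_of_nonpos hb (by linarith)
  -- measurability of the base function
  have hmeas : Measurable fun x : E d => ENNReal.ofReal ((1 + ‖x‖) ^ (-p)) := by
    have : Measurable fun x : E d => (1 + ‖x‖) ^ (-p) := by fun_prop
    exact this.ennreal_ofReal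
  -- scaling identity
  have hscale : ∫⁻ x : E d, ENNReal.ofReal ((1 + 2 ^ n * ‖x‖) ^ (-p)) =
      ENNReal.ofReal ((((2:ℝ) ^ n) ^ d)⁻¹) * K := by
    have h1 : ∀ x : E d, (1 + 2 ^ n * ‖x‖) = 1 + ‖((2:ℝ) ^ n) • x‖ := by
      intro x
      rw [norm_smul]
      simp [abs_of_pos (pow_pos (two_pos (α := ℝ)) n)]
    have h2 : ∫⁻ x : E d, ENNReal.ofReal ((1 + ‖((2:ℝ)^n) • x‖) ^ (-p)) =
        ENNReal.ofReal (|(((2:ℝ) ^ n) ^ Module.finrank ℝ (E d))⁻¹|) * K := by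
      rw [← lintegral_map hmeas (measurable_const_smul _),
        Measure.map_addHaar_smul volume (pow_ne_zero n two_ne_zero),
        lintegral_smul_measure]
      rw [smul_eq_mul, hKdef]
    simp only [finrank_euclideanSpace_fin] at h2
    rw [show (∫⁻ x : E d, ENNReal.ofReal ((1 + 2 ^ n * ‖x‖) ^ (-p))) =
        ∫⁻ x : E d, ENNReal.ofReal ((1 + ‖((2:ℝ)^n) • x‖) ^ (-p)) by
      congr 1; funext x; rw [h1 x], h2]
    congr 1
    rw [abs_of_pos]
    positivity
  -- main membership
  have hmem : (1/m) ∈ {c : ℝ | 0 < c ∧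
      ∫⁻ x : E d, ENNReal.ofReal (e ((fun z : E d => (1 + 2 ^ n * ‖z‖) ^ (-p)) x / c)) ≤ 1} := by
    refine ⟨hc, ?_⟩
    have hpt : ∀ x : E d, ENNReal.ofReal (e ((1 + 2 ^ n * ‖x‖) ^ (-p) / (1/m))) ≤
        ENNReal.ofReal a * ENNReal.ofReal ((1 + 2 ^ n * ‖x‖) ^ (-p)) := by
      intro x
      set ρ := (1 + 2 ^ n * ‖x‖) ^ (-p) with hρ
      obtain ⟨hρ0, hρ1⟩ := hrho x
      have hdiv : ρ / (1/m) = m * ρ := by field_simp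
      have hmρ : 0 < m * ρ := mul_pos hmpos hρ0
      have hle : m * ρ ≤ m := by nlinarith
      have := hmono (m * ρ) m hmρ hle
      have hbound : e (m * ρ) ≤ ρ * e m := by
        rw [div_le_div_iff₀ hmρ hmpos] at this
        have hmne : m ≠ 0 := ne_of_gt hmpos
        nlinarith
      have hbound2 : e (m * ρ) ≤ a * ρ := by nlinarith [hem, hρ0]
      rw [hdiv, ← ENNReal.ofReal_mul ha.le]
      exact ENNReal.ofReal_le_ofReal hbound2
    calc ∫⁻ x : E d, ENNReal.ofReal (e ((1 + 2 ^ n * ‖x‖) ^ (-p) / (1/m)))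
        ≤ ∫⁻ x : E d, ENNReal.ofReal a * ENNReal.ofReal ((1 + 2 ^ n * ‖x‖) ^ (-p)) :=
          lintegral_mono hpt
      _ = ENNReal.ofReal a * ∫⁻ x : E d, ENNReal.ofReal ((1 + 2 ^ n * ‖x‖) ^ (-p)) :=
          lintegral_const_mul' _ _ ENNReal.ofReal_ne_top
      _ = ENNReal.ofReal a * (ENNReal.ofReal ((((2:ℝ) ^ n) ^ d)⁻¹) * K) := by rw [hscale]
      _ = ENNReal.ofReal (a * (((2:ℝ) ^ n) ^ d)⁻¹) * K := by
          rw [← mul_assoc, ← ENNReal.ofReal_mul ha.le]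
      _ = ENNReal.ofReal (1/C) * K := by
          congr 2
          rw [hadef, ← pow_mul]
          field_simp
      _ ≤ ENNReal.ofReal (1/C) * ENNReal.ofReal C := by
          gcongr
          calc K = ENNReal.ofReal K.toReal := by rw [ENNReal.ofReal_toReal hKlt.ne]
            _ ≤ ENNReal.ofReal C := ENNReal.ofReal_le_ofReal (le_max_left _ _)
      _ = 1 := by
          rw [← ENNReal.ofReal_mul (by positivity)]
          rw [one_div, inv_mul_cancel₀ (ne_of_gt hCpos)]
          simp
  have hbdd0 : BddBelow {c : ℝ | 0 < c ∧
      ∫⁻ x : E d, ENNReal.ofReal (e ((fun z : E d => (1 + 2 ^ n * ‖z‖) ^ (-p)) x / c)) ≤ 1} :=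
    ⟨0, fun c hcmem => hcmem.1.le⟩
  exact csInf_le hbdd0 hmem
end
end
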